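/- Let G be a countable group generated by a finite symmetric set S. For any s ∈ S, any subset A ⊆ G, and any n ≥ 1, the measures ν_n satisfy ν_n(As) ≥ n·ν_n(A) / ((n+1)·|S|²·ρ(G,S)²) − 1/n. -/

import Mathlib

open Filter
open scoped Classical
set_option linter.unusedSectionVars false
set_option linter.unusedVariables false

noncomputable section

variable {G : Type*} [Group G]

/-- Words of length `n` with letters in `S` whose product lies in the subgroup `H`.
With `H = ⊥` this is the set `A(n,S)` of walks returning to the identity after `n` steps;
for general `H` it is `A_H(n,S)`. -/
def wordsIn (S : Finset G) (H : Subgroup G) (n : ℕ) : Finset (Fin n → G) :=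
  (Fintype.piFinset fun _ => S).filter fun w => (List.ofFn w).prod ∈ H

/-- `specRad S H` is the spectral radius of the Schreier graph of `H\G` w.r.t. `S`:
`lim (|A_H(2n,S)|/|S|^(2n))^(1/(2n))` (stated via `limsup`; the limit exists).
With `H = ⊥` this is the spectral radius `ρ(⟨S⟩,S)` of the Cayley graph of the group
generated by `S`; by convention it equals `1` when `S` is empty (trivial group). -/
def specRad (S : Finset G) (H : Subgroup G) : ℝ :=
  if S.Nonempty then
    Filter.limsup
      (fun n : ℕ =>
        (((wordsIn S H (2 * n)).card : ℝ) / (S.card : ℝ) ^ (2 * n)) ^ ((1 : ℝ) / (2 * (n : ℝ))))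
      Filter.atTop
  else 1

/-- `conjSubgroup g H = H^g = g⁻¹ H g`. -/
def conjSubgroup (g : G) (H : Subgroup G) : Subgroup G :=
  Subgroup.map (MulAut.conj g⁻¹).toMonoidHom H

/-- `prefixProd w i = w(i) = a₁⋯aᵢ`, the position of the walk `w` after `i` steps. -/
def prefixProd {n : ℕ} (w : Fin n → G) (i : ℕ) : G := ((List.ofFn w).take i).prod

/-- `muMass S n A = μₙ(A) = (1/(n|A(n,S)|)) Σ_{w ∈ A(n,S)} #{1 ≤ i ≤ n : w(i) ∈ A}`,
the expected proportion of time a uniformly random recurrent walk of length `n` spends in `A`. -/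
def muMass (S : Finset G) (n : ℕ) (A : Set G) : ℝ :=
  (1 / ((n : ℝ) * ((wordsIn S ⊥ n).card : ℝ))) *
    ∑ w ∈ wordsIn S ⊥ n, (((Finset.Icc 1 n).filter fun i => prefixProd w i ∈ A).card : ℝ)

/-- `nuMass S n A = νₙ(A) = (1/n) Σ_{k=n+1}^{2n} μ_{2k}(A)`. -/
def nuMass (S : Finset G) (n : ℕ) (A : Set G) : ℝ :=
  (1 / (n : ℝ)) * ∑ k ∈ Finset.Icc (n + 1) (2 * n), muMass S (2 * k) A

/-- lists of length m with entries in S -/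
def WL (S : Finset G) (m : ℕ) : Finset (List G) :=
  (Fintype.piFinset fun _ : Fin m => S).image List.ofFn

lemma mem_WL {S : Finset G} {m : ℕ} {l : List G} :
    l ∈ WL S m ↔ l.length = m ∧ ∀ x ∈ l, x ∈ S := by
  constructor
  · rintro hl
    simp only [WL, Finset.mem_image] at hl
    obtain ⟨w, hw, rfl⟩ := hl
    simp only [Fintype.mem_piFinset] at hw
    refine ⟨by simp, ?_⟩
    intro x hx
    rw [List.mem_ofFn] at hx
    obtain ⟨i, rfl⟩ := hx
    exact hw i
  · rintro ⟨rfl, hmem⟩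
    simp only [WL, Finset.mem_image]
    refine ⟨fun i => l.get i, ?_, List.ofFn_get l⟩
    simp only [Fintype.mem_piFinset]
    exact fun i => hmem _ (List.get_mem l i)

def cnt (S : Finset G) (m : ℕ) (g : G) : ℕ :=
  ((WL S m).filter fun l => l.prod = g).card

lemma cnt_eq_zero_of_not_mem_supp {S : Finset G} {m : ℕ} {g : G}
    (h : g ∉ (WL S m).image List.prod) : cnt S m g = 0 := by
  rw [cnt, Finset.card_eq_zero, Finset.filter_eq_empty_iff]
  rintro l hl rfl
  exact h (Finset.mem_image_of_mem _ hl)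

lemma card_WL (S : Finset G) (m : ℕ) : (WL S m).card = S.card ^ m := by
  rw [WL, Finset.card_image_of_injective _ List.ofFn_injective]
  simp

lemma cnt_le (S : Finset G) (m : ℕ) (g : G) : cnt S m g ≤ S.card ^ m := by
  rw [← card_WL S m]
  exact Finset.card_filter_le _ _

/-- splitting: count of words of length m+m' with product x -/
lemma cnt_split (S : Finset G) (m m' : ℕ) (x : G) (U : Finset G)
    (hU : (WL S m).image List.prod ⊆ U) :
    cnt S (m + m') x = ∑ g ∈ U, cnt S m g * cnt S m' (g⁻¹ * x) := by
  classical
  -- step 1: words of length m+m' with prod x  ↔ pairs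
  have key : ((WL S (m + m')).filter fun l => l.prod = x) =
      ((WL S m ×ˢ WL S m').filter fun p => (p.1 ++ p.2).prod = x).image
        fun p => p.1 ++ p.2 := by
    ext l
    simp only [Finset.mem_image, Finset.mem_filter, Finset.mem_product, mem_WL]
    constructor
    · rintro ⟨⟨hlen, hmem⟩, hprod⟩
      refine ⟨(l.take m, l.drop m), ⟨⟨⟨?_, ?_⟩, ⟨?_, ?_⟩⟩, ?_⟩, l.take_append_drop m⟩
      · rw [List.length_take, hlen]; omega
      · exact fun y hy => hmem y (List.mem_of_mem_take hy)
      · rw [List.length_drop, hlen]; omega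
      · exact fun y hy => hmem y (List.mem_of_mem_drop hy)
      · rw [l.take_append_drop m]; exact hprod
    · rintro ⟨⟨l₁, l₂⟩, ⟨⟨⟨h1, h1m⟩, ⟨h2, h2m⟩⟩, hprod⟩, rfl⟩
      refine ⟨⟨by simp [h1, h2], ?_⟩, hprod⟩
      intro y hy
      rcases List.mem_append.mp hy with h | h
      exacts [h1m y h, h2m y h]
  have hinj : Set.InjOn (fun p : List G × List G => p.1 ++ p.2)
      ((WL S m ×ˢ WL S m').filter fun p => (p.1 ++ p.2).prod = x) := by
    rintro ⟨a₁, a₂⟩ ha ⟨b₁, b₂⟩ hb h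
    simp only [Finset.coe_filter, Set.mem_setOf_eq, Finset.mem_product, mem_WL] at ha hb
    simp only at h
    have hlen : a₁.length = b₁.length := by
      rw [ha.1.1.1, hb.1.1.1]
    obtain ⟨h1, h2⟩ := List.append_inj h hlen
    simp [h1, h2]
  rw [cnt, key, Finset.card_image_of_injOn hinj]
  -- step 2: card of filtered product as a double sum
  rw [Finset.card_filter, Finset.sum_product]
  -- now: ∑ l₁ in WL S m, ∑ l₂ in WL S m', ite ((l₁++l₂).prod = x) 1 0
  have inner : ∀ l₁ ∈ WL S m,
      (∑ l₂ ∈ WL S m', if (l₁ ++ l₂).prod = x then 1 else 0) = cnt S m' (l₁.prod⁻¹ * x) := by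
    intro l₁ _
    rw [cnt, Finset.card_filter]
    refine Finset.sum_congr rfl fun l₂ _ => ?_
    rw [List.prod_append]
    exact ite_congr (propext ⟨fun h => by rw [← h]; group, fun h => by rw [h]; group⟩)
      (fun _ => rfl) (fun _ => rfl)
  rw [Finset.sum_congr rfl inner]
  -- step 3: fiberwise over prod
  have maps : ∀ l₁ ∈ WL S m, l₁.prod ∈ U := fun l₁ h => hU (Finset.mem_image_of_mem _ h)
  rw [← Finset.sum_fiberwise_of_maps_to maps fun l₁ => cnt S m' (l₁.prod⁻¹ * x)]
  refine Finset.sum_congr rfl fun g _ => ?_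
  have hcongr : ∀ l₁ ∈ (WL S m).filter (fun l => l.prod = g),
      cnt S m' (l₁.prod⁻¹ * x) = cnt S m' (g⁻¹ * x) := by
    intro l₁ hl₁
    rw [Finset.mem_filter] at hl₁
    rw [hl₁.2]
  rw [Finset.sum_congr rfl hcongr, Finset.sum_const, smul_eq_mul]
  rfl

/-- symmetry of counts via reverse-inverse -/
lemma cnt_symm (S : Finset G) (hsymm : ∀ s ∈ S, s⁻¹ ∈ S) (m : ℕ) (g : G) :
    cnt S m g⁻¹ = cnt S m g := by
  classical
  rw [cnt, cnt]
  apply Finset.card_bij' (fun l _ => (l.map (fun x : G => x⁻¹)).reverse)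
    (fun l _ => (l.map (fun x : G => x⁻¹)).reverse)
  · intro l _
    simp [List.map_reverse, List.reverse_reverse, List.map_map, Function.comp]
  · intro l _
    simp [List.map_reverse, List.reverse_reverse, List.map_map, Function.comp]


  · intro l hl
    rw [Finset.mem_filter, mem_WL] at hl ⊢
    obtain ⟨⟨hlen, hmem⟩, hprod⟩ := hl
    refine ⟨⟨by simp [hlen], ?_⟩, ?_⟩
    · intro x hx
      rw [List.mem_reverse, List.mem_map] at hx
      obtain ⟨y, hy, rfl⟩ := hx
      exact hsymm y (hmem y hy)
    · rw [← List.prod_inv_reverse, hprod]; exact inv_inv g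
  · intro l hl
    rw [Finset.mem_filter, mem_WL] at hl ⊢
    obtain ⟨⟨hlen, hmem⟩, hprod⟩ := hl
    refine ⟨⟨by simp [hlen], ?_⟩, ?_⟩
    · intro x hx
      rw [List.mem_reverse, List.mem_map] at hx
      obtain ⟨y, hy, rfl⟩ := hx
      exact hsymm y (hmem y hy)
    · rw [← List.prod_inv_reverse, hprod]

/-- the alternating word s s⁻¹ s s⁻¹ ... -/
def altW (s : G) : ℕ → List G
  | 0 => []
  | k + 1 => s :: s⁻¹ :: altW s k

lemma altW_mem {s : G} {S : Finset G} (hs : s ∈ S) (hsymm : ∀ t ∈ S, t⁻¹ ∈ S) (k : ℕ) :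
    altW s k ∈ (WL S (2 * k)).filter fun l => l.prod = 1 := by
  induction k with
  | zero => simp [altW, mem_WL]
  | succ k ih =>
    rw [Finset.mem_filter, mem_WL] at ih ⊢
    obtain ⟨⟨hlen, hmem⟩, hprod⟩ := ih
    refine ⟨⟨by simp [altW, hlen]; ring, ?_⟩, ?_⟩
    · intro x hx
      rcases hx with _ | ⟨_, hx⟩
      · exact hs
      · rcases hx with _ | ⟨_, hx⟩
        · exact hsymm s hs
        · exact hmem x hx
    · simp [altW, hprod]

lemma cnt_pos {s : G} {S : Finset G} (hs : s ∈ S) (hsymm : ∀ t ∈ S, t⁻¹ ∈ S) (k : ℕ) :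
    0 < cnt S (2 * k) 1 :=
  Finset.card_pos.mpr ⟨altW s k, altW_mem hs hsymm k⟩

lemma wordsIn_card (S : Finset G) (H : Subgroup G) (n : ℕ) :
    (wordsIn S H n).card = (((WL S n).filter fun l => l.prod ∈ H)).card := by
  rw [wordsIn, WL, Finset.filter_image, Finset.card_image_of_injective _ List.ofFn_injective]

lemma wordsIn_card_bot (S : Finset G) (n : ℕ) :
    (wordsIn S ⊥ n).card = cnt S n 1 := by
  rw [wordsIn_card, cnt]
  congr 1

/-- log-convexity of return counts, via Cauchy-Schwarz -/
lemma cnt_logconvex (S : Finset G) (hsymm : ∀ t ∈ S, t⁻¹ ∈ S) (k : ℕ) :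
    ((cnt S (2 * (k + 1)) 1 : ℝ)) ^ 2 ≤
      (cnt S (2 * k) 1 : ℝ) * (cnt S (2 * (k + 2)) 1 : ℝ) := by
  classical
  set U : Finset G := ((WL S k).image List.prod) ∪ ((WL S (k + 2)).image List.prod) with hU
  have h1 : cnt S (2 * (k + 1)) 1 = ∑ g ∈ U, cnt S k g * cnt S (k + 2) g := by
    have : 2 * (k + 1) = k + (k + 2) := by ring
    rw [this, cnt_split S k (k + 2) 1 U Finset.subset_union_left]
    refine Finset.sum_congr rfl fun g _ => ?_
    rw [mul_one, cnt_symm S hsymm]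
  have h2 : cnt S (2 * k) 1 = ∑ g ∈ U, cnt S k g * cnt S k g := by
    have : 2 * k = k + k := by ring
    rw [this, cnt_split S k k 1 U Finset.subset_union_left]
    refine Finset.sum_congr rfl fun g _ => ?_
    rw [mul_one, cnt_symm S hsymm]
  have h3 : cnt S (2 * (k + 2)) 1 = ∑ g ∈ U, cnt S (k + 2) g * cnt S (k + 2) g := by
    have : 2 * (k + 2) = (k + 2) + (k + 2) := by ring
    rw [this, cnt_split S (k + 2) (k + 2) 1 U Finset.subset_union_right]
    refine Finset.sum_congr rfl fun g _ => ?_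
    rw [mul_one, cnt_symm S hsymm]
  rw [h1, h2, h3]
  push_cast
  have := Finset.sum_mul_sq_le_sq_mul_sq (R := ℝ) U (fun g => (cnt S k g : ℝ))
    (fun g => (cnt S (k + 2) g : ℝ))
  simpa only [pow_two] using this

lemma cnt_zero_one (S : Finset G) : cnt S 0 1 = 1 := by
  have : WL S 0 = {[]} := by
    ext l
    simp only [mem_WL, List.length_eq_zero_iff, Finset.mem_singleton]
    constructor
    · rintro ⟨rfl, -⟩; rfl
    · rintro rfl; simp
  rw [cnt, this]
  rw [Finset.filter_singleton]
  simp

lemma specRad_eq (S : Finset G) (hS : S.Nonempty) :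
    specRad S ⊥ = Filter.limsup
      (fun n : ℕ => (((cnt S (2 * n) 1 : ℝ)) / (S.card : ℝ) ^ (2 * n)) ^ ((1 : ℝ) / (2 * (n : ℝ))))
      Filter.atTop := by
  rw [specRad, if_pos hS]
  congr 1
  funext n
  rw [wordsIn_card_bot]

set_option maxHeartbeats 1000000 in
lemma ratio_le_spec {s : G} (S : Finset G) (hs : s ∈ S) (hsymm : ∀ t ∈ S, t⁻¹ ∈ S) (k : ℕ) :
    (cnt S (2 * (k + 1)) 1 : ℝ) ≤ (S.card : ℝ) ^ 2 * specRad S ⊥ ^ 2 * (cnt S (2 * k) 1 : ℝ) := by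
  classical
  set b : ℕ → ℝ := fun j => (cnt S (2 * j) 1 : ℝ) with hbdef
  have hb : ∀ j, 0 < b j := fun j => by
    simp only [hbdef]
    exact_mod_cast cnt_pos hs hsymm j
  have hcard : (1 : ℝ) ≤ (S.card : ℝ) := by
    exact_mod_cast Finset.card_pos.mpr ⟨s, hs⟩
  have hcard0 : (0 : ℝ) < (S.card : ℝ) := lt_of_lt_of_le one_pos hcard
  set q : ℝ := b (k + 1) / b k with hqdef
  have hq : 0 < q := div_pos (hb _) (hb _)
  have hlc : ∀ j, b (j + 1) ^ 2 ≤ b j * b (j + 2) := fun j => by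
    simpa only [hbdef] using cnt_logconvex S hsymm j
  have hmono : ∀ j, k ≤ j → q * b j ≤ b (j + 1) := by
    intro j hj
    induction j, hj using Nat.le_induction with
    | base => rw [hqdef, div_mul_cancel₀ _ (hb k).ne']
    | succ j hj ih =>
      have h1 : q * b (j + 1) * b j ≤ b (j + 2) * b j := by
        nlinarith [hlc j, hb j, hb (j + 1), hb (j + 2)]
      exact le_of_mul_le_mul_right h1 (hb j)
  have hgeo : ∀ m, k ≤ m → b k * q ^ (m - k) ≤ b m := by
    intro m hm
    induction m, hm using Nat.le_induction with
    | base => simp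
    | succ m hm ih =>
      have h2 : m + 1 - k = (m - k) + 1 := by omega
      rw [h2, pow_succ, ← mul_assoc]
      calc b k * q ^ (m - k) * q ≤ b m * q := mul_le_mul_of_nonneg_right ih hq.le
        _ = q * b m := mul_comm _ _
        _ ≤ b (m + 1) := hmono m hm
  set c : ℝ := b k / q ^ k with hcdef
  have hc : 0 < c := div_pos (hb k) (pow_pos hq k)
  set t : ℕ → ℝ := fun m =>
    ((cnt S (2 * m) 1 : ℝ) / (S.card : ℝ) ^ (2 * m)) ^ ((1 : ℝ) / (2 * (m : ℝ))) with htdef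
  set u : ℕ → ℝ := fun m =>
    c ^ ((1 : ℝ) / (2 * (m : ℝ))) * (Real.sqrt q / (S.card : ℝ)) with hudef
  -- u m ≤ t m for m ≥ k+1
  have hut : ∀ m : ℕ, k + 1 ≤ m → u m ≤ t m := by
    intro m hm
    have hm0 : m ≠ 0 := by omega
    have hmR : (0 : ℝ) < (m : ℝ) := by exact_mod_cast Nat.pos_of_ne_zero hm0
    have hexp : (0 : ℝ) ≤ (1 : ℝ) / (2 * (m : ℝ)) := by positivity
    have hcq : c * q ^ m = b k * q ^ (m - k) := by
      have hmk : m - k + k = m := by omega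
      rw [hcdef, div_mul_eq_mul_div, div_eq_iff (pow_pos hq k).ne']
      rw [mul_assoc, ← pow_add, hmk]
    have hbase : c * q ^ m / (S.card : ℝ) ^ (2 * m) ≤
        (cnt S (2 * m) 1 : ℝ) / (S.card : ℝ) ^ (2 * m) := by
      have hnum : c * q ^ m ≤ (cnt S (2 * m) 1 : ℝ) := by
        rw [hcq]; exact hgeo m (by omega)
      gcongr
    have hP : ((S.card : ℝ) ^ (2 * m)) ^ ((1 : ℝ) / (2 * (m : ℝ))) = (S.card : ℝ) := by
      rw [← Real.rpow_natCast ((S.card : ℝ)) (2 * m), ← Real.rpow_mul hcard0.le]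
      have h9 : ((2 * m : ℕ) : ℝ) * ((1 : ℝ) / (2 * (m : ℝ))) = 1 := by
        push_cast
        field_simp
      rw [h9, Real.rpow_one]
    have hQ : (q ^ m) ^ ((1 : ℝ) / (2 * (m : ℝ))) = Real.sqrt q := by
      rw [← Real.rpow_natCast q m, ← Real.rpow_mul hq.le]
      have h9 : (m : ℝ) * ((1 : ℝ) / (2 * (m : ℝ))) = 1 / 2 := by
        field_simp
      rw [h9, Real.sqrt_eq_rpow]
    have hrw : u m = (c * q ^ m / (S.card : ℝ) ^ (2 * m)) ^ ((1 : ℝ) / (2 * (m : ℝ))) := by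
      rw [Real.div_rpow (by positivity) (by positivity),
        Real.mul_rpow hc.le (pow_pos hq m).le, hQ, hP, hudef, mul_div_assoc]
    rw [hrw, htdef]
    exact Real.rpow_le_rpow (by positivity) hbase hexp
  -- u tends to sqrt q / card
  have hu_tendsto : Filter.Tendsto u Filter.atTop (nhds (Real.sqrt q / (S.card : ℝ))) := by
    have h0 : Filter.Tendsto (fun m : ℕ => (1 : ℝ) / (2 * (m : ℝ))) Filter.atTop (nhds 0) := by
      have heq : (fun m : ℕ => (1 : ℝ) / (2 * (m : ℝ))) =
          fun m : ℕ => (1 / 2 : ℝ) * (1 / (m : ℝ)) := by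
        funext m
        ring
      rw [heq]
      have h5 := tendsto_one_div_atTop_nhds_zero_nat.const_mul (1 / 2 : ℝ)
      rw [mul_zero] at h5
      exact h5
    have h1 : Filter.Tendsto (fun m : ℕ => c ^ ((1 : ℝ) / (2 * (m : ℝ)))) Filter.atTop
        (nhds 1) := by
      have hcont : Filter.Tendsto (fun x : ℝ => c ^ x) (nhds 0) (nhds (c ^ (0 : ℝ))) := by
        have : ContinuousAt (fun x : ℝ => c ^ x) 0 :=
          Real.continuousAt_const_rpow hc.ne'
        exact this.tendsto
      rw [Real.rpow_zero] at hcont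
      exact hcont.comp h0
    have := h1.mul_const (Real.sqrt q / (S.card : ℝ))
    rw [one_mul] at this
    exact this
  -- limsup comparison
  have htle : ∀ m, t m ≤ 1 := by
    intro m
    simp only [htdef]
    have hcnt : (cnt S (2 * m) 1 : ℝ) ≤ (S.card : ℝ) ^ (2 * m) := by
      exact_mod_cast cnt_le S (2 * m) 1
    have hd : (0 : ℝ) < (S.card : ℝ) ^ (2 * m) := by positivity
    exact Real.rpow_le_one (by positivity) ((div_le_one hd).mpr hcnt) (by positivity)
  have hspec : Real.sqrt q / (S.card : ℝ) ≤ specRad S ⊥ := by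
    rw [specRad_eq S ⟨s, hs⟩]
    have heq : Real.sqrt q / (S.card : ℝ) = Filter.limsup u Filter.atTop :=
      (hu_tendsto.limsup_eq).symm
    rw [heq]
    apply Filter.limsup_le_limsup
    · filter_upwards [Filter.eventually_ge_atTop (k + 1)] with m hm
      exact hut m hm
    · exact hu_tendsto.isBoundedUnder_ge.isCoboundedUnder_le
    · exact ⟨1, Filter.eventually_map.mpr (Filter.Eventually.of_forall htle)⟩
  -- conclude
  have h0le : (0 : ℝ) ≤ Real.sqrt q / (S.card : ℝ) := by positivity
  have hsq : q / (S.card : ℝ) ^ 2 ≤ specRad S ⊥ ^ 2 := by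
    have := pow_le_pow_left₀ h0le hspec 2
    calc q / (S.card : ℝ) ^ 2 = (Real.sqrt q / (S.card : ℝ)) ^ 2 := by
          rw [div_pow, Real.sq_sqrt hq.le]
      _ ≤ specRad S ⊥ ^ 2 := this
  have : q ≤ (S.card : ℝ) ^ 2 * specRad S ⊥ ^ 2 := by
    rw [div_le_iff₀ (by positivity)] at hsq
    linarith [hsq]
  calc (cnt S (2 * (k + 1)) 1 : ℝ) = q * b k := by
        rw [hqdef, div_mul_cancel₀ _ (hb k).ne']
    _ ≤ (S.card : ℝ) ^ 2 * specRad S ⊥ ^ 2 * b k :=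
        mul_le_mul_of_nonneg_right this (hb k).le

/-- time count: number of 1 ≤ i ≤ m with prefix product in A -/
def tc (m : ℕ) (l : List G) (A : Set G) : ℕ :=
  ((Finset.Icc 1 m).filter fun i => (l.take i).prod ∈ A).card

lemma muMass_eq (S : Finset G) (n : ℕ) (A : Set G) :
    muMass S n A = (1 / ((n : ℝ) * (cnt S n 1 : ℝ))) *
      ∑ l ∈ (WL S n).filter fun l => l.prod = 1, (tc n l A : ℝ) := by
  rw [muMass, wordsIn_card_bot]
  congr 1
  have himg : (WL S n).filter (fun l => l.prod = 1) =
      (wordsIn S ⊥ n).image List.ofFn := by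
    rw [WL, Finset.filter_image, wordsIn]
    congr 1
  rw [himg, Finset.sum_image (fun w _ w' _ h => List.ofFn_injective h)]
  rfl

lemma tc_le (m : ℕ) (l : List G) (A : Set G) : tc m l A ≤ m := by
  calc tc m l A ≤ (Finset.Icc 1 m).card := Finset.card_filter_le _ _
    _ = m := by rw [Nat.card_Icc]; omega

lemma muMass_nonneg (S : Finset G) (n : ℕ) (A : Set G) : 0 ≤ muMass S n A := by
  rw [muMass_eq]
  apply mul_nonneg (by positivity)
  exact Finset.sum_nonneg fun l _ => by positivity

lemma muMass_le_one (S : Finset G) (n : ℕ) (A : Set G) : muMass S n A ≤ 1 := by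
  rw [muMass_eq]
  rcases Nat.eq_zero_or_pos n with hn | hn
  · simp [hn]
  rcases Nat.eq_zero_or_pos (cnt S n 1) with hc | hc
  · simp [hc]
  have hpos : (0 : ℝ) < (n : ℝ) * (cnt S n 1 : ℝ) := by
    apply mul_pos <;> exact_mod_cast (by assumption)
  rw [one_div, inv_mul_le_iff₀ hpos, mul_one]
  calc (∑ l ∈ (WL S n).filter fun l => l.prod = 1, (tc n l A : ℝ))
      ≤ ∑ l ∈ (WL S n).filter fun l => l.prod = 1, (n : ℝ) :=
        Finset.sum_le_sum fun l _ => by exact_mod_cast tc_le n l A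
    _ = ((WL S n).filter fun l => l.prod = 1).card * (n : ℝ) := by
        rw [Finset.sum_const, nsmul_eq_mul]
    _ = (n : ℝ) * (cnt S n 1 : ℝ) := by rw [cnt]; ring

/-- key insertion inequality -/
lemma step_count (S : Finset G) {s : G} (hs : s ∈ S) (hsymm : ∀ t ∈ S, t⁻¹ ∈ S)
    (A : Set G) (k : ℕ) :
    ∑ l ∈ (WL S (2 * k)).filter (fun l => l.prod = 1), tc (2 * k) l A ≤
      ∑ l ∈ (WL S (2 * k + 2)).filter (fun l => l.prod = 1),
        tc (2 * k + 2) l ((fun a => a * s) '' A) := by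
  classical
  set F₁ := (WL S (2 * k)).filter (fun l => l.prod = 1) with hF₁
  set F₂ := (WL S (2 * k + 2)).filter (fun l => l.prod = 1) with hF₂
  set Sig1 := F₁.sigma (fun l => (Finset.Icc 1 (2 * k)).filter fun i => (l.take i).prod ∈ A)
  set Sig2 := F₂.sigma (fun l => (Finset.Icc 1 (2 * k + 2)).filter fun i =>
    (l.take i).prod ∈ (fun a => a * s) '' A)
  have hL : (∑ l ∈ F₁, tc (2 * k) l A) = Sig1.card := (Finset.card_sigma _ _).symm
  have hR : (∑ l ∈ F₂, tc (2 * k + 2) l ((fun a => a * s) '' A)) = Sig2.card :=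
    (Finset.card_sigma _ _).symm
  rw [hL, hR]
  apply Finset.card_le_card_of_injOn
    (fun p => ⟨p.1.take p.2 ++ s :: s⁻¹ :: p.1.drop p.2, p.2 + 1⟩)
  · rintro ⟨l, i⟩ hp
    simp only [Finset.mem_coe, Sig1, Sig2, hF₁, hF₂, Finset.mem_sigma, Finset.mem_filter, mem_WL, Finset.mem_Icc] at hp ⊢
    obtain ⟨⟨⟨hlen, hmem⟩, hprod⟩, ⟨hi1, hi2⟩, hA⟩ := hp
    have hile : i ≤ l.length := by omega
    have htklen : (l.take i).length = i := by
      rw [List.length_take]; omega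
    refine ⟨⟨⟨?_, ?_⟩, ?_⟩, ⟨by omega, by omega⟩, ?_⟩
    · simp only [List.length_append, List.length_cons, List.length_take, List.length_drop]
      omega
    · intro x hx
      rcases List.mem_append.mp hx with hx | hx
      · exact hmem x (List.mem_of_mem_take hx)
      · rcases hx with _ | ⟨_, hx⟩
        · exact hs
        · rcases hx with _ | ⟨_, hx⟩
          · exact hsymm s hs
          · exact hmem x (List.mem_of_mem_drop hx)
    · rw [List.prod_append, List.prod_cons, List.prod_cons, ← mul_assoc, ← mul_assoc,
        mul_inv_cancel_right, ← List.prod_append, List.take_append_drop, hprod]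
    · have htk : (l.take i ++ s :: s⁻¹ :: l.drop i).take (i + 1) = l.take i ++ [s] := by
        rw [List.take_append, htklen,
          List.take_of_length_le (by omega : (l.take i).length ≤ i + 1)]
        congr 1
        have : i + 1 - i = 1 := by omega
        rw [this]
        rfl
      rw [htk, List.prod_append]
      exact ⟨(l.take i).prod, hA, by simp⟩
  · rintro ⟨l₁, i₁⟩ h₁ ⟨l₂, i₂⟩ h₂ heq
    simp only [Sig1, hF₁, Finset.coe_sigma, Set.mem_sigma_iff, Finset.mem_coe, Finset.mem_filter,
      mem_WL, Finset.mem_Icc] at h₁ h₂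
    obtain ⟨⟨⟨hlen₁, -⟩, -⟩, hi₁, -⟩ := h₁
    obtain ⟨⟨⟨hlen₂, -⟩, -⟩, hi₂, -⟩ := h₂
    have hii : i₁ = i₂ := by
      have := congrArg Sigma.snd heq
      simpa using this
    subst hii
    have hll : l₁.take i₁ ++ s :: s⁻¹ :: l₁.drop i₁ = l₂.take i₁ ++ s :: s⁻¹ :: l₂.drop i₁ := by
      have := congrArg Sigma.fst heq
      simpa using this
    have htklen₁ : (l₁.take i₁).length = i₁ := by rw [List.length_take]; omega
    have htklen₂ : (l₂.take i₁).length = i₁ := by rw [List.length_take]; omega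
    have htake : l₁.take i₁ = l₂.take i₁ := by
      have := congrArg (List.take i₁) hll
      rwa [List.take_left' htklen₁, List.take_left' htklen₂] at this
    have hassoc : ∀ l : List G,
        l.take i₁ ++ s :: s⁻¹ :: l.drop i₁ = (l.take i₁ ++ [s, s⁻¹]) ++ l.drop i₁ := by
      intro l
      simp
    have hdrop : l₁.drop i₁ = l₂.drop i₁ := by
      have := congrArg (List.drop (i₁ + 2)) hll
      rw [hassoc l₁, hassoc l₂] at this
      rwa [List.drop_left' (by rw [List.length_append, htklen₁]; rfl),
        List.drop_left' (by rw [List.length_append, htklen₂]; rfl)] at this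
    have : l₁ = l₂ := by
      rw [← List.take_append_drop i₁ l₁, ← List.take_append_drop i₁ l₂, htake, hdrop]
    simp [this]

lemma one_le_R {s : G} (S : Finset G) (hs : s ∈ S) (hsymm : ∀ t ∈ S, t⁻¹ ∈ S) :
    1 ≤ (S.card : ℝ) ^ 2 * specRad S ⊥ ^ 2 := by
  have h := ratio_le_spec S hs hsymm 0
  rw [cnt_zero_one] at h
  have h1 : (1 : ℝ) ≤ (cnt S (2 * 1) 1 : ℝ) := by
    exact_mod_cast cnt_pos hs hsymm 1
  simpa using h1.trans (by simpa using h)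

lemma mu_step {s : G} (S : Finset G) (hs : s ∈ S) (hsymm : ∀ t ∈ S, t⁻¹ ∈ S)
    {n j : ℕ} (hn : 1 ≤ n) (hj : n ≤ j) (A : Set G) :
    ((n : ℝ) / (((n : ℝ) + 1) * ((S.card : ℝ) ^ 2 * specRad S ⊥ ^ 2))) * muMass S (2 * j) A ≤
      muMass S (2 * (j + 1)) ((fun a => a * s) '' A) := by
  classical
  set R : ℝ := (S.card : ℝ) ^ 2 * specRad S ⊥ ^ 2 with hRdef
  have hR1 : 1 ≤ R := one_le_R S hs hsymm
  have hR0 : 0 < R := lt_of_lt_of_le one_pos hR1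
  have hc1 : (0 : ℝ) < (cnt S (2 * j) 1 : ℝ) := by exact_mod_cast cnt_pos hs hsymm j
  have hc2 : (0 : ℝ) < (cnt S (2 * (j + 1)) 1 : ℝ) := by exact_mod_cast cnt_pos hs hsymm (j + 1)
  have hratio : (cnt S (2 * (j + 1)) 1 : ℝ) ≤ R * (cnt S (2 * j) 1 : ℝ) := by
    rw [hRdef]
    exact ratio_le_spec S hs hsymm j
  -- sums
  set x : ℝ := ∑ l ∈ (WL S (2 * j)).filter (fun l => l.prod = 1), (tc (2 * j) l A : ℝ) with hxdef
  set y : ℝ := ∑ l ∈ (WL S (2 * (j + 1))).filter (fun l => l.prod = 1),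
    (tc (2 * (j + 1)) l ((fun a => a * s) '' A) : ℝ) with hydef
  have hxy : x ≤ y := by
    have h22 : 2 * (j + 1) = 2 * j + 2 := by ring
    have hsc := step_count S hs hsymm A j
    rw [hxdef, hydef]
    simp only [h22]
    exact_mod_cast hsc
  have hx0 : 0 ≤ x := Finset.sum_nonneg fun l _ => by positivity
  -- rewrite mu
  rw [muMass_eq, muMass_eq]
  set a : ℝ := ((2 * (j + 1) : ℕ) : ℝ) * (cnt S (2 * (j + 1)) 1 : ℝ) with hadef
  set b : ℝ := ((2 * j : ℕ) : ℝ) * (cnt S (2 * j) 1 : ℝ) with hbdef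
  have hja : (0 : ℝ) < ((2 * (j + 1) : ℕ) : ℝ) := by positivity
  have hjb : (0 : ℝ) < ((2 * j : ℕ) : ℝ) := by
    have : 0 < 2 * j := by omega
    exact_mod_cast this
  have ha : 0 < a := mul_pos hja hc2
  have hb : 0 < b := mul_pos hjb hc1
  set C : ℝ := (n : ℝ) / (((n : ℝ) + 1) * R) with hCdef
  have hD : (0 : ℝ) < ((n : ℝ) + 1) * R := by positivity
  have hCb : C / b ≤ 1 / a := by
    rw [div_le_div_iff₀ hb ha, hCdef, div_mul_eq_mul_div, div_le_iff₀ hD, one_mul]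
    -- n * a ≤ b * ((n+1) * R)
    have hnj : (n : ℝ) * ((2 * (j + 1) : ℕ) : ℝ) ≤ ((n : ℝ) + 1) * ((2 * j : ℕ) : ℝ) := by
      have hjn : (n : ℝ) ≤ (j : ℝ) := by exact_mod_cast hj
      push_cast
      nlinarith [hjn]
    calc (n : ℝ) * a = ((n : ℝ) * ((2 * (j + 1) : ℕ) : ℝ)) * (cnt S (2 * (j + 1)) 1 : ℝ) := by
          rw [hadef]; ring
      _ ≤ (((n : ℝ) + 1) * ((2 * j : ℕ) : ℝ)) * (R * (cnt S (2 * j) 1 : ℝ)) := by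
          apply mul_le_mul hnj hratio hc2.le
          positivity
      _ = b * (((n : ℝ) + 1) * R) := by rw [hbdef]; ring
  calc C * (1 / b * x) = (C / b) * x := by ring
    _ ≤ (1 / a) * x := mul_le_mul_of_nonneg_right hCb hx0
    _ ≤ (1 / a) * y := mul_le_mul_of_nonneg_left hxy (by positivity)

/-- **Lemma (asymptotic quasi-invariance).** For any `s ∈ S` and any `A ⊆ G`,
`νₙ(As) ≥ n·νₙ(A)/((n+1)|S|²ρ(G,S)²) − 1/n`. -/
theorem nu_quasi_invariant [Countable G]
    (S : Finset G) (hgen : Subgroup.closure (S : Set G) = ⊤)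
    (hsymm : ∀ s ∈ S, s⁻¹ ∈ S)
    (n : ℕ) (hn : 1 ≤ n) (s : G) (hs : s ∈ S) (A : Set G) :
    nuMass S n ((fun a => a * s) '' A) ≥
      (n : ℝ) * nuMass S n A / (((n : ℝ) + 1) * (S.card : ℝ) ^ 2 * specRad S ⊥ ^ 2)
        - 1 / (n : ℝ) := by
  classical
  set R : ℝ := (S.card : ℝ) ^ 2 * specRad S ⊥ ^ 2 with hRdef
  have hR1 : 1 ≤ R := one_le_R S hs hsymm
  have hR0 : 0 < R := lt_of_lt_of_le one_pos hR1
  have hnR : (0 : ℝ) < (n : ℝ) := by exact_mod_cast hn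
  set C : ℝ := (n : ℝ) / (((n : ℝ) + 1) * R) with hCdef
  have hC0 : 0 ≤ C := by positivity
  have hC1 : C ≤ 1 := by
    rw [hCdef, div_le_one (by positivity)]
    nlinarith [hR1, hnR]
  -- reindex: Icc (n+1) (2n) = map (+1) (Icc n (2n-1))
  have himg : Finset.Icc (n + 1) (2 * n) = (Finset.Icc n (2 * n - 1)).map (addRightEmbedding 1) := by
    rw [Finset.map_add_right_Icc]
    congr 1
    omega
  have hsum1 : C * (∑ j ∈ Finset.Icc n (2 * n - 1), muMass S (2 * j) A) ≤
      ∑ k ∈ Finset.Icc (n + 1) (2 * n), muMass S (2 * k) ((fun a => a * s) '' A) := by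
    rw [himg, Finset.sum_map, Finset.mul_sum]
    apply Finset.sum_le_sum
    intro j hjmem
    rw [Finset.mem_Icc] at hjmem
    have := mu_step S hs hsymm hn hjmem.1 A
    simpa [hRdef, hCdef, addRightEmbedding] using this
  -- boundary terms
  have hbd : (∑ k ∈ Finset.Icc (n + 1) (2 * n), muMass S (2 * k) A) - 1 ≤
      ∑ j ∈ Finset.Icc n (2 * n - 1), muMass S (2 * j) A := by
    obtain ⟨m, hm⟩ : ∃ m, 2 * n = m + 1 := ⟨2 * n - 1, by omega⟩
    have hm' : 2 * n - 1 = m := by omega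
    rw [hm', hm]
    have e1 : ∑ k ∈ Finset.Icc n (m + 1), muMass S (2 * k) A =
        (∑ j ∈ Finset.Icc n m, muMass S (2 * j) A) + muMass S (2 * (m + 1)) A :=
      Finset.sum_Icc_succ_top (by omega) (fun k => muMass S (2 * k) A)
    have hins : Finset.Icc n (m + 1) = insert n (Finset.Icc (n + 1) (m + 1)) := by
      ext x
      simp only [Finset.mem_Icc, Finset.mem_insert]
      omega
    have e2 : ∑ k ∈ Finset.Icc n (m + 1), muMass S (2 * k) A =
        muMass S (2 * n) A + ∑ k ∈ Finset.Icc (n + 1) (m + 1), muMass S (2 * k) A := by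
      rw [hins, Finset.sum_insert (by simp)]
    have hmu1 : muMass S (2 * (m + 1)) A ≤ 1 := muMass_le_one S _ A
    have hmu0 : 0 ≤ muMass S (2 * n) A := muMass_nonneg S _ A
    linarith
  -- put it together
  have hnu1 : nuMass S n ((fun a => a * s) '' A) =
      (1 / (n : ℝ)) * ∑ k ∈ Finset.Icc (n + 1) (2 * n),
        muMass S (2 * k) ((fun a => a * s) '' A) := rfl
  have hnu2 : nuMass S n A =
      (1 / (n : ℝ)) * ∑ k ∈ Finset.Icc (n + 1) (2 * n), muMass S (2 * k) A := rfl
  have hgoalrw : (n : ℝ) * nuMass S n A / (((n : ℝ) + 1) * (S.card : ℝ) ^ 2 * specRad S ⊥ ^ 2) =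
      C * nuMass S n A - 0 := by
    rw [hCdef, hRdef, sub_zero, div_mul_eq_mul_div]
    congr 1
    ring
  rw [ge_iff_le, hgoalrw, sub_zero]
  have chain : C * nuMass S n A - C / (n : ℝ) ≤ nuMass S n ((fun a => a * s) '' A) := by
    rw [hnu1, hnu2]
    calc C * ((1 / (n : ℝ)) * ∑ k ∈ Finset.Icc (n + 1) (2 * n), muMass S (2 * k) A) - C / (n : ℝ)
        = (1 / (n : ℝ)) * (C * ((∑ k ∈ Finset.Icc (n + 1) (2 * n), muMass S (2 * k) A) - 1)) := by
          field_simp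
      _ ≤ (1 / (n : ℝ)) * (C * ∑ j ∈ Finset.Icc n (2 * n - 1), muMass S (2 * j) A) := by
          apply mul_le_mul_of_nonneg_left ?_ (by positivity)
          exact mul_le_mul_of_nonneg_left hbd hC0
      _ ≤ (1 / (n : ℝ)) * ∑ k ∈ Finset.Icc (n + 1) (2 * n),
            muMass S (2 * k) ((fun a => a * s) '' A) :=
          mul_le_mul_of_nonneg_left hsum1 (by positivity)
  have hCn : C / (n : ℝ) ≤ 1 / (n : ℝ) := by
    gcongr
  linarith


end
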